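/- Let G_0 satisfy Assumption C with parameters α, β and let γ = min{2α−1, 2α−β−1}. Then there exists C > 0 such that |(G_{0,h}(ξ)+1)^{−1} − (G_0(ξ)+1)^{−1}| ≤ C h^γ for all h > 0 and all ξ ∈ ℝ^d with hξ ∈ [−3π/2, 3π/2]^d. -/

import Mathlib

open MeasureTheory Real Complex Filter

noncomputable section

/-- Euclidean space `ℝ^d`. -/
abbrev Rd (d : ℕ) := EuclideanSpace ℝ (Fin d)

/-- The Hilbert space `𝓗 = L²(ℝ^d)`. -/
abbrev Hc (d : ℕ) : Type := Lp ℂ 2 (volume : Measure (Rd d))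

/-- The measure `h^d · (counting measure)` on `ℤ^d`, giving the `ℓ²(hℤ^d)` norm. -/
def μd (d : ℕ) (h : ℝ) : Measure (Fin d → ℤ) := ENNReal.ofReal (h ^ d) • Measure.count

/-- The Hilbert space `𝓗_h = ℓ²(hℤ^d)`. -/
abbrev Hd (d : ℕ) (h : ℝ) : Type := Lp ℂ 2 (μd d h)

/-- The embedding of `ℤ^d` into `ℝ^d`. -/
def zr {d : ℕ} (k : Fin d → ℤ) : Rd d := WithLp.toLp 2 (fun i => (k i : ℝ))

/-- The translated and scaled function `φ_{h,k}(x) = φ0((x - h k)/h)`. -/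
def tr {d : ℕ} (φ0 : Rd d → ℂ) (h : ℝ) (k : Fin d → ℤ) : Rd d → ℂ :=
  fun x => φ0 (h⁻¹ • (x - h • zr k))

/-- `F` is the unitary Fourier transform on `L²(ℝ^d)`, with the convention
`(𝓕 f)(ξ) = (2π)^{-d/2} ∫ e^{-i x·ξ} f(x) dx` (characterized on integrable functions). -/
def IsFourier {d : ℕ} (F : Hc d ≃ₗᵢ[ℂ] Hc d) : Prop :=
  ∀ f : Hc d, Integrable (f : Rd d → ℂ) volume →
    (F f : Rd d → ℂ) =ᵐ[volume]
      fun ξ => (((2 * π) ^ (-(d : ℝ) / 2) : ℝ) : ℂ) *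
        ∫ x : Rd d, Complex.exp (-Complex.I * ((inner ℝ x ξ : ℝ) : ℂ)) * f x

/-- `Φ h k` is the `L²` element represented by `φ_{h,k} = φ0((· - hk)/h)`. -/
def IsTransl {d : ℕ} (φ0 : Hc d) (Φ : ℝ → (Fin d → ℤ) → Hc d) : Prop :=
  ∀ h : ℝ, 0 < h → ∀ k : Fin d → ℤ, (Φ h k : Rd d → ℂ) =ᵐ[volume] tr (φ0 : Rd d → ℂ) h k

/-- Two systems in `L²(ℝ^d)` are biorthogonal: `⟨u_k, v_n⟩ = δ_{k,n}`. -/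
def Biorth {d : ℕ} (Φ Ψ : (Fin d → ℤ) → Hc d) : Prop :=
  ∀ k n : Fin d → ℤ, (inner ℂ (Φ k) (Ψ n) : ℂ) = if k = n then 1 else 0

/-- `{Φ k}_{k∈ℤ^d}` is a Riesz sequence in `L²(ℝ^d)`:
`A Σ|c_k|² ≤ ‖Σ c_k Φ k‖² ≤ B Σ|c_k|²` for all `c ∈ ℓ²(ℤ^d)`. -/
def RieszSeq {d : ℕ} (Φ : (Fin d → ℤ) → Hc d) : Prop :=
  ∃ A B : ℝ, 0 < A ∧ 0 < B ∧
    ∀ c : lp (fun _ : Fin d → ℤ => ℂ) 2, ∃ s : Hc d,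
      HasSum (fun k : Fin d → ℤ => c k • Φ k) s ∧
      A * ‖c‖ ^ 2 ≤ ‖s‖ ^ 2 ∧ ‖s‖ ^ 2 ≤ B * ‖c‖ ^ 2

/-- Assumption A: the integer translates of `φ0` and `ψ0` (represented by the
families `Φ 1` and `Ψ 1`) form biorthogonal Riesz sequences in `L²(ℝ^d)`. -/
def AssumptionA {d : ℕ} (φ0 ψ0 : Hc d) (Φ Ψ : ℝ → (Fin d → ℤ) → Hc d) : Prop :=
  IsTransl φ0 Φ ∧ IsTransl ψ0 Ψ ∧ Biorth (Φ 1) (Ψ 1) ∧ RieszSeq (Φ 1) ∧ RieszSeq (Ψ 1)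

/-- The embedding operator `J_h u = Σ_k u(k) φ_{h,k}`. -/
def IsJ {d : ℕ} (Φh : (Fin d → ℤ) → Hc d) (h : ℝ) (J : Hd d h →L[ℂ] Hc d) : Prop :=
  ∀ u : Hd d h, HasSum (fun k : Fin d → ℤ => (u : (Fin d → ℤ) → ℂ) k • Φh k) (J u)

/-- The discretization operator `(K_h f)(k) = h^{-d} ⟨ψ_{h,k}, f⟩`. -/
def IsK {d : ℕ} (ψ0 : Rd d → ℂ) (h : ℝ) (K : Hc d →L[ℂ] Hd d h) : Prop :=
  ∀ f : Hc d, ∀ k : Fin d → ℤ,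
    (K f : (Fin d → ℤ) → ℂ) k
      = ((h ^ d : ℝ) : ℂ)⁻¹ * ∫ x : Rd d, (starRingEnd ℂ) (tr ψ0 h k x) * f x

/-- Assumption B: Assumption A together with essential boundedness of `φ̂0, ψ̂0`,
the support conditions `supp ⊆ [-3π/2, 3π/2]^d` and the lower bounds
`|φ̂0|, |ψ̂0| ≥ c0 > 0` on `[-π/2, π/2]^d`. -/
def AssumptionB {d : ℕ} (F : Hc d ≃ₗᵢ[ℂ] Hc d) (φ0 ψ0 : Hc d)
    (Φ Ψ : ℝ → (Fin d → ℤ) → Hc d) : Prop :=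
  AssumptionA φ0 ψ0 Φ Ψ ∧
  (∃ M : ℝ, (∀ᵐ ξ : Rd d ∂volume, ‖(F φ0 : Rd d → ℂ) ξ‖ ≤ M) ∧
            (∀ᵐ ξ : Rd d ∂volume, ‖(F ψ0 : Rd d → ℂ) ξ‖ ≤ M)) ∧
  (∀ᵐ ξ : Rd d ∂volume, (¬ ∀ i, |ξ i| ≤ 3 * π / 2) → (F φ0 : Rd d → ℂ) ξ = 0) ∧
  (∀ᵐ ξ : Rd d ∂volume, (¬ ∀ i, |ξ i| ≤ 3 * π / 2) → (F ψ0 : Rd d → ℂ) ξ = 0) ∧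
  (∃ c0 : ℝ, 0 < c0 ∧
    (∀ᵐ ξ : Rd d ∂volume, (∀ i, |ξ i| ≤ π / 2) → c0 ≤ ‖(F φ0 : Rd d → ℂ) ξ‖) ∧
    (∀ᵐ ξ : Rd d ∂volume, (∀ i, |ξ i| ≤ π / 2) → c0 ≤ ‖(F ψ0 : Rd d → ℂ) ξ‖))

/-- Assumption C on the Fourier multiplier `G_0`, with parameters `α, β`. -/
structure AssumptionC (d : ℕ) (G0 : Rd d → ℝ) (α β : ℝ) : Prop where
  halpha : 1 / 2 < α
  hbeta : -(1 / 2 : ℝ) < β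
  hab1 : α ≤ 1 + β
  hab2 : 1 + β < 2 * α
  hab3 : 2 * α ≤ 3 + β
  smooth : ContDiff ℝ 1 G0
  nonneg : ∀ ξ : Rd d, 0 ≤ G0 ξ
  zero : G0 0 = 0
  lower : ∃ c : ℝ, 0 < c ∧ ∃ c0 : ℝ, 0 < c0 ∧
    ∀ ξ : Rd d, c0 ≤ ‖ξ‖ → c * ‖ξ‖ ^ α ≤ G0 ξ
  grad : ∃ c : ℝ, 0 < c ∧ ∀ ξ : Rd d, ‖fderiv ℝ G0 ξ‖ ≤ c * ‖ξ‖ ^ β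
  symm : ∀ ξ : Rd d, G0 ξ = G0 (WithLp.toLp 2 (fun i => |ξ i|))

/-- Assumption D on `G_0 = |·|^α + G̃_0`, with parameters `α, β̃`. -/
structure AssumptionD (d : ℕ) (G0 Gt : Rd d → ℝ) (α βt : ℝ) : Prop where
  hbt : 0 ≤ βt
  hab : 1 + βt < 2 * α
  eq : ∀ ξ : Rd d, G0 ξ = ‖ξ‖ ^ α + Gt ξ
  smooth : ContDiff ℝ 1 Gt
  nonneg : ∀ ξ : Rd d, 0 ≤ Gt ξ
  zero : Gt 0 = 0
  grad : ∃ c : ℝ, 0 < c ∧ ∃ c0 : ℝ, 0 < c0 ∧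
    ∀ ξ : Rd d, c0 ≤ ‖ξ‖ → ‖fderiv ℝ Gt ξ‖ ≤ c * ‖ξ‖ ^ βt
  symm : ∀ ξ : Rd d, Gt ξ = Gt (WithLp.toLp 2 (fun i => |ξ i|))

/-- The discretized symbol `G_{0,h}(ξ) = G_0((2/h) sin(hξ_1/2), …, (2/h) sin(hξ_d/2))`. -/
def G0disc {d : ℕ} (G0 : Rd d → ℝ) (h : ℝ) : Rd d → ℝ :=
  fun ξ => G0 (WithLp.toLp 2 (fun i => 2 / h * Real.sin (h / 2 * ξ i)))

/-- The box `𝕋_h^d = [-π/h, π/h]^d`. -/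
def BoxT (d : ℕ) (h : ℝ) : Set (Rd d) := {ξ : Rd d | ∀ i, |ξ i| ≤ π / h}

/-- The Hilbert space `L²(𝕋_h^d)`. -/
abbrev HT (d : ℕ) (h : ℝ) : Type := Lp ℂ 2 (volume.restrict (BoxT d h))

/-- `Fh` is the unitary discrete Fourier transform `𝖥_h : ℓ²(hℤ^d) → L²(𝕋_h^d)`,
`(𝖥_h u)(ξ) = h^d (2π)^{-d/2} Σ_n u(n) e^{-i h n·ξ}` (characterized on finitely
supported sequences). -/
def IsFh {d : ℕ} (h : ℝ) (Fh : Hd d h ≃ₗᵢ[ℂ] HT d h) : Prop :=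
  ∀ u : Hd d h, (Function.support (u : (Fin d → ℤ) → ℂ)).Finite →
    (Fh u : Rd d → ℂ) =ᵐ[volume.restrict (BoxT d h)]
      fun ξ => ((h ^ d * (2 * π) ^ (-(d : ℝ) / 2) : ℝ) : ℂ) *
        ∑' n : Fin d → ℤ, (u : (Fin d → ℤ) → ℂ) n *
          Complex.exp (-Complex.I * (h : ℂ) * ((inner ℝ (zr n) ξ : ℝ) : ℂ))

/-- `R` is the free resolvent `(H_0 - z)^{-1}`: the Fourier multiplier with
symbol `(G_0(ξ) - z)^{-1}`. -/
def IsFreeResC {d : ℕ} (F : Hc d ≃ₗᵢ[ℂ] Hc d) (G0 : Rd d → ℝ) (z : ℂ)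
    (R : Hc d →L[ℂ] Hc d) : Prop :=
  ∀ f : Hc d, (F (R f) : Rd d → ℂ) =ᵐ[volume]
    fun ξ => (((G0 ξ : ℝ) : ℂ) - z)⁻¹ * (F f : Rd d → ℂ) ξ

/-- `R` is the free discrete resolvent `(H_{0,h} - z)^{-1}`: the discrete Fourier
multiplier with symbol `(G_{0,h}(ξ) - z)^{-1}`. -/
def IsFreeResD {d : ℕ} (h : ℝ) (Fh : Hd d h ≃ₗᵢ[ℂ] HT d h) (G0 : Rd d → ℝ) (z : ℂ)
    (R : Hd d h →L[ℂ] Hd d h) : Prop :=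
  ∀ u : Hd d h, (Fh (R u) : Rd d → ℂ) =ᵐ[volume.restrict (BoxT d h)]
    fun ξ => (((G0disc G0 h ξ : ℝ) : ℂ) - z)⁻¹ * (Fh u : Rd d → ℂ) ξ

/-- `H` is the discrete free Hamiltonian `H_{0,h} = 𝖥_h^* G_{0,h}(·) 𝖥_h`. -/
def IsH0d {d : ℕ} (h : ℝ) (Fh : Hd d h ≃ₗᵢ[ℂ] HT d h) (G0 : Rd d → ℝ)
    (H : Hd d h →L[ℂ] Hd d h) : Prop :=
  ∀ u : Hd d h, (Fh (H u) : Rd d → ℂ) =ᵐ[volume.restrict (BoxT d h)]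
    fun ξ => ((G0disc G0 h ξ : ℝ) : ℂ) * (Fh u : Rd d → ℂ) ξ

/-- `W` is the multiplication operator by the discretized potential `V_h(k) = V(hk)`. -/
def IsVd {d : ℕ} (V : Rd d → ℝ) (h : ℝ) (W : Hd d h →L[ℂ] Hd d h) : Prop :=
  ∀ u : Hd d h, ∀ k : Fin d → ℤ,
    (W u : (Fin d → ℤ) → ℂ) k = ((V (h • zr k) : ℝ) : ℂ) * (u : (Fin d → ℤ) → ℂ) k

/-- `W` is the multiplication operator by `V` on `L²(ℝ^d)`. -/
def IsVc {d : ℕ} (V : Rd d → ℝ) (W : Hc d →L[ℂ] Hc d) : Prop :=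
  ∀ f : Hc d, (W f : Rd d → ℂ) =ᵐ[volume] fun x => ((V x : ℝ) : ℂ) * f x

/-- `R` is the resolvent `(H - z)^{-1}` of `H = H_0 + V`: for every `f`,
`(H - z)(R f) = f` (read on the Fourier side), and `H - z` is injective. -/
def IsResC {d : ℕ} (F : Hc d ≃ₗᵢ[ℂ] Hc d) (G0 : Rd d → ℝ) (W : Hc d →L[ℂ] Hc d)
    (z : ℂ) (R : Hc d →L[ℂ] Hc d) : Prop :=
  (∀ f : Hc d, ∀ᵐ ξ : Rd d ∂volume,
    (((G0 ξ : ℝ) : ℂ) - z) * (F (R f) : Rd d → ℂ) ξ + (F (W (R f)) : Rd d → ℂ) ξ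
      = (F f : Rd d → ℂ) ξ) ∧
  (∀ g : Hc d, (∀ᵐ ξ : Rd d ∂volume,
    (((G0 ξ : ℝ) : ℂ) - z) * (F g : Rd d → ℂ) ξ + (F (W g) : Rd d → ℂ) ξ = 0) → g = 0)

/-- `R` is the resolvent `(H_h - z)^{-1}` of the bounded operator `H_h = H_{0,h} + V_h`. -/
def IsResD {d : ℕ} (h : ℝ) (H0 W : Hd d h →L[ℂ] Hd d h) (z : ℂ)
    (R : Hd d h →L[ℂ] Hd d h) : Prop :=
  (H0 + W - z • ContinuousLinearMap.id ℂ (Hd d h)).comp R = ContinuousLinearMap.id ℂ (Hd d h) ∧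
  R.comp (H0 + W - z • ContinuousLinearMap.id ℂ (Hd d h)) = ContinuousLinearMap.id ℂ (Hd d h)

/-- The spectrum of `H = H_0 + V`: the complement of the set of `z` for which a
bounded two-sided resolvent exists. -/
def specC {d : ℕ} (F : Hc d ≃ₗᵢ[ℂ] Hc d) (G0 : Rd d → ℝ) (W : Hc d →L[ℂ] Hc d) : Set ℂ :=
  {z : ℂ | ¬ ∃ R : Hc d →L[ℂ] Hc d, IsResC F G0 W z R}

/-- The local Hausdorff distance in the compact set `K` between `X` and `Y`,
`max{0, sup_{x∈X∩K} dist(x,Y), sup_{y∈Y∩K} dist(y,X)}` (with `sup ∅ = -∞`). -/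
def locHausDist (K X Y : Set ℂ) : ℝ :=
  max 0 (max (sSup ((fun x => Metric.infDist x Y) '' (X ∩ K)))
             (sSup ((fun y => Metric.infDist y X) '' (Y ∩ K))))

/-- Assumption V: `V` is real-valued, bounded, and Hölder continuous of order `θ`. -/
def AssumptionV {d : ℕ} (V : Rd d → ℝ) (θ : ℝ) : Prop :=
  0 < θ ∧ θ ≤ 1 ∧ (∃ M : ℝ, ∀ x : Rd d, |V x| ≤ M) ∧
    ∃ L : ℝ, ∀ x y : Rd d, |V x - V y| ≤ L * ‖x - y‖ ^ θ



section Stmt8Aux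

open Real in
lemma stmt8_sin_cubic {t : ℝ} (ht : 0 ≤ t) : t - Real.sin t ≤ t ^ 3 / 6 := by
  have hd : ∀ x : ℝ, HasDerivAt (fun s : ℝ => s ^ 3 / 6 - (s - Real.sin s))
      ((3:ℕ) * x ^ 2 / 6 - (1 - Real.cos x)) x := fun x => by
    simpa using (((hasDerivAt_pow 3 x).div_const 6).fun_sub
      ((hasDerivAt_id' x).fun_sub (Real.hasDerivAt_sin x)))
  have mono : MonotoneOn (fun s : ℝ => s ^ 3 / 6 - (s - Real.sin s)) (Set.Ici 0) := by
    apply monotoneOn_of_deriv_nonneg (convex_Ici 0)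
    · fun_prop
    · intro x _
      exact (hd x).differentiableAt.differentiableWithinAt
    · intro x _
      rw [(hd x).deriv]
      have := Real.one_sub_sq_div_two_le_cos (x := x)
      push_cast
      nlinarith
  have h0 := mono (Set.mem_Ici.2 le_rfl) (Set.mem_Ici.2 ht) ht
  simp only [Real.sin_zero] at h0
  norm_num at h0
  linarith

lemma stmt8_abs_sin_sub (t : ℝ) : |Real.sin t - t| ≤ |t| ^ 3 / 6 := by
  rcases le_or_gt 0 t with ht | ht
  · rw [_root_.abs_of_nonpos (by linarith [Real.sin_le ht]), _root_.abs_of_nonneg ht]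
    linarith [stmt8_sin_cubic ht]
  · have h' := stmt8_sin_cubic (neg_nonneg.2 ht.le)
    rw [Real.sin_neg] at h'
    rw [_root_.abs_of_nonneg (by linarith [Real.le_sin ht.le]), _root_.abs_of_neg ht]
    ring_nf at h' ⊢
    linarith

lemma stmt8_coord_bound {h : ℝ} (hh : 0 < h) (x : ℝ) :
    |2 / h * Real.sin (h / 2 * x) - x| ≤ h ^ 2 * |x| ^ 3 / 24 := by
  have key := stmt8_abs_sin_sub (h / 2 * x)
  have hne : h ≠ 0 := hh.ne'
  have hx : 2 / h * Real.sin (h / 2 * x) - x = 2 / h * (Real.sin (h / 2 * x) - h / 2 * x) := by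
    field_simp
  rw [hx, _root_.abs_mul, _root_.abs_of_pos (by positivity : (0:ℝ) < 2 / h)]
  have h2 : |h / 2 * x| ^ 3 = (h / 2) ^ 3 * |x| ^ 3 := by
    rw [_root_.abs_mul, mul_pow, _root_.abs_of_pos (by positivity : (0:ℝ) < h / 2)]
  calc 2 / h * |Real.sin (h / 2 * x) - h / 2 * x| ≤ 2 / h * (|h / 2 * x| ^ 3 / 6) := by
        exact mul_le_mul_of_nonneg_left key (by positivity)
    _ = h ^ 2 * |x| ^ 3 / 24 := by rw [h2]; field_simp; ring

/-- The constant `sin(3π/4)/(3π/4)`. -/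
def stmt8s0 : ℝ := Real.sin (3 * Real.pi / 4) / (3 * Real.pi / 4)

lemma stmt8s0_pos : 0 < stmt8s0 := by
  have := Real.pi_pos
  exact div_pos (Real.sin_pos_of_pos_of_lt_pi (by positivity) (by linarith)) (by positivity)

lemma stmt8s0_le_one : stmt8s0 ≤ 1 := by
  have := Real.pi_pos
  rw [stmt8s0, div_le_one (by positivity)]
  exact Real.sin_le (by positivity)

lemma stmt8_sin_lower {t : ℝ} (h0 : 0 ≤ t) (h1 : t ≤ 3 * Real.pi / 4) :
    stmt8s0 * t ≤ Real.sin t := by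
  have hπ := Real.pi_pos
  have hT : (0:ℝ) < 3 * Real.pi / 4 := by positivity
  have hmem0 : (0:ℝ) ∈ Set.Icc (0:ℝ) Real.pi := ⟨le_rfl, hπ.le⟩
  have hmemT : (3 * Real.pi / 4 : ℝ) ∈ Set.Icc (0:ℝ) Real.pi := ⟨hT.le, by linarith⟩
  have ha : 0 ≤ 1 - t / (3 * Real.pi / 4) := by
    rw [sub_nonneg, div_le_one hT]; exact h1
  have hb : 0 ≤ t / (3 * Real.pi / 4) := by positivity
  have hcon := strictConcaveOn_sin_Icc.concaveOn.2 hmem0 hmemT ha hb (by ring)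
  have harg : (1 - t / (3 * Real.pi / 4)) • (0:ℝ) + (t / (3 * Real.pi / 4)) • (3 * Real.pi / 4) = t := by
    rw [smul_eq_mul, smul_eq_mul, mul_zero, zero_add, div_mul_cancel₀ _ hT.ne']
  rw [harg, smul_eq_mul, smul_eq_mul, Real.sin_zero, mul_zero, zero_add] at hcon
  calc stmt8s0 * t = t / (3 * Real.pi / 4) * Real.sin (3 * Real.pi / 4) := by
        rw [stmt8s0]; field_simp
    _ ≤ Real.sin t := hcon

lemma stmt8_seg_coord_nonneg {h x a b : ℝ} (hh : 0 < h) (hx0 : 0 ≤ x) (hx : h * x ≤ 3 * Real.pi / 2)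
    (ha : 0 ≤ a) (hb : 0 ≤ b) (hab : a + b = 1) :
    stmt8s0 * x ≤ a * x + b * (2 / h * Real.sin (h / 2 * x)) ∧
      a * x + b * (2 / h * Real.sin (h / 2 * x)) ≤ x := by
  have hu0 : 0 ≤ h / 2 * x := by positivity
  have hu1 : h / 2 * x ≤ 3 * Real.pi / 4 := by linarith
  have hls := stmt8_sin_lower hu0 hu1
  have hus := Real.sin_le hu0
  have hη1 : stmt8s0 * x ≤ 2 / h * Real.sin (h / 2 * x) := by
    calc stmt8s0 * x = 2 / h * (stmt8s0 * (h / 2 * x)) := by field_simp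
      _ ≤ 2 / h * Real.sin (h / 2 * x) := mul_le_mul_of_nonneg_left hls (by positivity)
  have hη2 : 2 / h * Real.sin (h / 2 * x) ≤ x := by
    calc 2 / h * Real.sin (h / 2 * x) ≤ 2 / h * (h / 2 * x) :=
          mul_le_mul_of_nonneg_left hus (by positivity)
      _ = x := by field_simp
  have h1 : b * (stmt8s0 * x) ≤ b * (2 / h * Real.sin (h / 2 * x)) :=
    mul_le_mul_of_nonneg_left hη1 hb
  have h2 : a * (stmt8s0 * x) ≤ a * x :=
    mul_le_mul_of_nonneg_left (by nlinarith [stmt8s0_le_one, stmt8s0_pos]) ha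
  have h3 : b * (2 / h * Real.sin (h / 2 * x)) ≤ b * x := mul_le_mul_of_nonneg_left hη2 hb
  constructor
  · nlinarith
  · nlinarith

lemma stmt8_seg_coord {h x a b : ℝ} (hh : 0 < h) (hx : |h * x| ≤ 3 * Real.pi / 2)
    (ha : 0 ≤ a) (hb : 0 ≤ b) (hab : a + b = 1) :
    stmt8s0 * |x| ≤ |a * x + b * (2 / h * Real.sin (h / 2 * x))| ∧
      |a * x + b * (2 / h * Real.sin (h / 2 * x))| ≤ |x| := by
  rcases le_or_gt 0 x with hx0 | hx0
  · have hx' : h * x ≤ 3 * Real.pi / 2 := (_root_.le_abs_self _).trans hx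
    obtain ⟨l, u⟩ := stmt8_seg_coord_nonneg hh hx0 hx' ha hb hab
    have hpos : 0 ≤ a * x + b * (2 / h * Real.sin (h / 2 * x)) :=
      le_trans (mul_nonneg stmt8s0_pos.le hx0) l
    rw [_root_.abs_of_nonneg hx0, _root_.abs_of_nonneg hpos]
    exact ⟨l, u⟩
  · have hy0 : 0 ≤ -x := by linarith
    have hy' : h * (-x) ≤ 3 * Real.pi / 2 := by
      calc h * (-x) = -(h * x) := by ring
        _ ≤ |h * x| := _root_.neg_le_abs _
        _ ≤ _ := hx
    obtain ⟨l, u⟩ := stmt8_seg_coord_nonneg hh hy0 hy' ha hb hab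
    have heq : a * (-x) + b * (2 / h * Real.sin (h / 2 * (-x)))
        = -(a * x + b * (2 / h * Real.sin (h / 2 * x))) := by
      rw [show h / 2 * (-x) = -(h / 2 * x) by ring, Real.sin_neg]; ring
    rw [heq] at l u
    have hs0 := stmt8s0_pos
    constructor
    · calc stmt8s0 * |x| = stmt8s0 * (-x) := by rw [_root_.abs_of_neg hx0]
        _ ≤ -(a * x + b * (2 / h * Real.sin (h / 2 * x))) := l
        _ ≤ |a * x + b * (2 / h * Real.sin (h / 2 * x))| := by
            rw [← _root_.abs_neg]; exact _root_.le_abs_self _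
    · rw [_root_.abs_of_neg hx0, _root_.abs_le]
      constructor
      · linarith
      · nlinarith

lemma stmt8_norm_le_of_abs_le {d : ℕ} {v w : Rd d} (hc : ∀ i, |v i| ≤ |w i|) : ‖v‖ ≤ ‖w‖ := by
  rw [EuclideanSpace.norm_eq, EuclideanSpace.norm_eq]
  apply Real.sqrt_le_sqrt
  apply Finset.sum_le_sum
  intro i _
  simp only [Real.norm_eq_abs]
  exact pow_le_pow_left₀ (_root_.abs_nonneg _) (hc i) 2

lemma stmt8_norm_le_sum_abs {d : ℕ} (v : Rd d) : ‖v‖ ≤ ∑ i, |v i| := by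
  rw [EuclideanSpace.norm_eq]
  have h1 : ∑ i, ‖v i‖ ^ 2 ≤ (∑ i, |v i|) ^ 2 := by
    simpa [Real.norm_eq_abs] using
      Finset.sum_sq_le_sq_sum_of_nonneg (s := Finset.univ) (f := fun i => |v i|)
        (fun i _ => _root_.abs_nonneg (v i))
  calc Real.sqrt (∑ i, ‖v i‖ ^ 2) ≤ Real.sqrt ((∑ i, |v i|) ^ 2) := Real.sqrt_le_sqrt h1
    _ = ∑ i, |v i| := Real.sqrt_sq (Finset.sum_nonneg fun i _ => _root_.abs_nonneg _)

lemma stmt8_abs_coord_le_norm {d : ℕ} (v : Rd d) (i : Fin d) : |v i| ≤ ‖v‖ := by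
  have h1 : |v i| ^ 2 ≤ ∑ j, ‖v j‖ ^ 2 := by
    have := Finset.single_le_sum (f := fun j => ‖v j‖ ^ 2)
      (fun j _ => by positivity) (Finset.mem_univ i)
    simpa [Real.norm_eq_abs] using this
  have := Real.sqrt_le_sqrt h1
  rwa [Real.sqrt_sq (_root_.abs_nonneg _), ← EuclideanSpace.norm_eq] at this

lemma stmt8_sum_sq_eq {d : ℕ} (v : Rd d) : ∑ i, |v i| ^ 2 = ‖v‖ ^ 2 := by
  rw [EuclideanSpace.norm_eq, Real.sq_sqrt (Finset.sum_nonneg fun i _ => by positivity)]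
  simp [Real.norm_eq_abs]

end Stmt8Aux

set_option maxHeartbeats 800000 in
/-- Lemma 3.5. -/
theorem stmt8 (d : ℕ) (G0 : Rd d → ℝ) (α β : ℝ) (hC : AssumptionC d G0 α β) :
    ∃ C : ℝ, 0 < C ∧ ∀ h : ℝ, 0 < h → ∀ ξ : Rd d, (∀ i, |h * ξ i| ≤ 3 * π / 2) →
      |(G0disc G0 h ξ + 1)⁻¹ - (G0 ξ + 1)⁻¹|
        ≤ C * h ^ (min (2 * α - 1) (2 * α - β - 1)) := by
  obtain ⟨c, hc, c0, hc0, hlow⟩ := hC.lower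
  obtain ⟨cg, hcg, hgrad⟩ := hC.grad
  have hs0 := stmt8s0_pos
  have hs01 := stmt8s0_le_one
  have hπ := Real.pi_pos
  set γ := min (2 * α - 1) (2 * α - β - 1) with hγdef
  have hγ2 : γ ≤ 2 := (min_le_right _ _).trans (by linarith [hC.hab3])
  have hγlb : -β - 1 ≤ γ := le_min (by linarith [hC.halpha, hC.hbeta]) (by linarith [hC.halpha])
  have hγe : γ ≤ 2 * α - β - 1 := min_le_right _ _
  have hα0 : 0 < α := by linarith [hC.halpha]
  set Cb := cg * max (stmt8s0 ^ β) 1 with hCbdef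
  have hCb : 0 < Cb := mul_pos hcg (lt_of_lt_of_le one_pos (le_max_right _ _))
  set B := max ((d : ℝ) * (3 * π / 2)) 1 with hBdef
  have hB1 : (1:ℝ) ≤ B := le_max_right _ _
  set R := max (c0 / stmt8s0) 1 with hRdef
  have hR1 : (1:ℝ) ≤ R := le_max_right _ _
  have hRc0 : c0 ≤ stmt8s0 * R := by
    have h1 : c0 / stmt8s0 ≤ R := le_max_left _ _
    calc c0 = stmt8s0 * (c0 / stmt8s0) := by field_simp
      _ ≤ stmt8s0 * R := mul_le_mul_of_nonneg_left h1 hs0.le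
  have hBγ : 0 < B ^ (2 - γ) := Real.rpow_pos_of_pos (by linarith) _
  have hRγ : 0 < R ^ (β + 1 + γ) := Real.rpow_pos_of_pos (by linarith) _
  have hcs : 0 < c ^ 2 * stmt8s0 ^ α := by
    exact mul_pos (pow_pos hc 2) (Real.rpow_pos_of_pos hs0 _)
  set CC := Cb / 24 * B ^ (2 - γ) * (R ^ (β + 1 + γ) + (c ^ 2 * stmt8s0 ^ α)⁻¹) with hCCdef
  have hCC : 0 < CC :=
    mul_pos (mul_pos (div_pos hCb (by norm_num)) hBγ) (add_pos hRγ (inv_pos.2 hcs))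
  refine ⟨CC, hCC, ?_⟩
  intro h hh ξ hbox
  have hhγ : 0 < h ^ γ := Real.rpow_pos_of_pos hh _
  by_cases hξ0 : ξ = 0
  · have hdisc0 : G0disc G0 h ξ = G0 ξ := by
      subst hξ0
      show G0 (WithLp.toLp 2 (fun i => 2 / h * Real.sin (h / 2 * (0 : Rd d) i))) = G0 0
      congr 1
      ext i
      show 2 / h * Real.sin (h / 2 * 0) = 0
      simp
    rw [hdisc0, sub_self, abs_zero]
    exact (mul_pos hCC hhγ).le
  · have hξn : 0 < ‖ξ‖ := norm_pos_iff.2 hξ0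
    set η : Rd d := WithLp.toLp 2 (fun i => 2 / h * Real.sin (h / 2 * ξ i)) with hηdef
    have hGdisc : G0disc G0 h ξ = G0 η := rfl
    have hηi : ∀ i, η i = 2 / h * Real.sin (h / 2 * ξ i) := fun i => rfl
    have hseg : ∀ ζ ∈ segment ℝ ξ η, ∀ i, stmt8s0 * |ξ i| ≤ |ζ i| ∧ |ζ i| ≤ |ξ i| := by
      rintro ζ ⟨a, b, ha, hb, hab, rfl⟩ i
      have hz : (a • ξ + b • η) i = a * ξ i + b * (2 / h * Real.sin (h / 2 * ξ i)) := rfl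
      rw [hz]
      exact stmt8_seg_coord hh (hbox i) ha hb hab
    have hζup : ∀ ζ ∈ segment ℝ ξ η, ‖ζ‖ ≤ ‖ξ‖ := fun ζ hζ =>
      stmt8_norm_le_of_abs_le fun i => (hseg ζ hζ i).2
    have hζlo : ∀ ζ ∈ segment ℝ ξ η, stmt8s0 * ‖ξ‖ ≤ ‖ζ‖ := by
      intro ζ hζ
      have h1 : ‖(stmt8s0 • ξ : Rd d)‖ ≤ ‖ζ‖ := by
        apply stmt8_norm_le_of_abs_le
        intro i
        have h2 : |(stmt8s0 • ξ : Rd d) i| = stmt8s0 * |ξ i| := by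
          show |stmt8s0 * ξ i| = _
          rw [_root_.abs_mul, _root_.abs_of_pos hs0]
        rw [h2]; exact (hseg ζ hζ i).1
      rwa [norm_smul, Real.norm_eq_abs, _root_.abs_of_pos hs0] at h1
    have hmax : ∀ ζ ∈ segment ℝ ξ η, ‖ζ‖ ^ β ≤ max (stmt8s0 ^ β) 1 * ‖ξ‖ ^ β := by
      intro ζ hζ
      rcases le_or_gt 0 β with hβ | hβ
      · calc ‖ζ‖ ^ β ≤ ‖ξ‖ ^ β := Real.rpow_le_rpow (norm_nonneg _) (hζup ζ hζ) hβ
          _ = 1 * ‖ξ‖ ^ β := (one_mul _).symm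
          _ ≤ max (stmt8s0 ^ β) 1 * ‖ξ‖ ^ β :=
            mul_le_mul_of_nonneg_right (le_max_right _ _) (Real.rpow_nonneg (norm_nonneg _) _)
      · have hsp : 0 < stmt8s0 * ‖ξ‖ := mul_pos hs0 hξn
        calc ‖ζ‖ ^ β ≤ (stmt8s0 * ‖ξ‖) ^ β :=
              Real.rpow_le_rpow_of_nonpos hsp (hζlo ζ hζ) hβ.le
          _ = stmt8s0 ^ β * ‖ξ‖ ^ β := Real.mul_rpow hs0.le (norm_nonneg _)
          _ ≤ max (stmt8s0 ^ β) 1 * ‖ξ‖ ^ β :=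
            mul_le_mul_of_nonneg_right (le_max_left _ _) (Real.rpow_nonneg (norm_nonneg _) _)
    have hfb : ∀ ζ ∈ segment ℝ ξ η, ‖fderiv ℝ G0 ζ‖ ≤ Cb * ‖ξ‖ ^ β := by
      intro ζ hζ
      calc ‖fderiv ℝ G0 ζ‖ ≤ cg * ‖ζ‖ ^ β := hgrad ζ
        _ ≤ cg * (max (stmt8s0 ^ β) 1 * ‖ξ‖ ^ β) := mul_le_mul_of_nonneg_left (hmax ζ hζ) hcg.le
        _ = Cb * ‖ξ‖ ^ β := by rw [hCbdef]; ring
    have hdiff := hC.smooth.differentiable one_ne_zero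
    have hmvt : |G0 η - G0 ξ| ≤ Cb * ‖ξ‖ ^ β * ‖η - ξ‖ := by
      have := Convex.norm_image_sub_le_of_norm_fderiv_le
        (fun ζ _ => hdiff.differentiableAt) hfb (convex_segment ξ η)
        (left_mem_segment ℝ ξ η) (right_mem_segment ℝ ξ η)
      simpa [Real.norm_eq_abs] using this
    have hdist : ‖η - ξ‖ ≤ h ^ 2 * ‖ξ‖ ^ 3 / 24 := by
      have h1 : ‖η - ξ‖ ≤ ∑ i, |η i - ξ i| := by
        have h1' := stmt8_norm_le_sum_abs (η - ξ)
        have h1e : ∀ i, (η - ξ) i = η i - ξ i := fun i => rfl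
        calc ‖η - ξ‖ ≤ ∑ i, |(η - ξ) i| := h1'
          _ = ∑ i, |η i - ξ i| := Finset.sum_congr rfl fun i _ => by rw [h1e i]
      have h3 : ∑ i, |η i - ξ i| ≤ ∑ i, h ^ 2 * |ξ i| ^ 3 / 24 :=
        Finset.sum_le_sum fun i _ => by rw [hηi i]; exact stmt8_coord_bound hh (ξ i)
      have h5 : ∑ i, |ξ i| ^ 3 ≤ ‖ξ‖ ^ 3 := by
        calc ∑ i, |ξ i| ^ 3 ≤ ∑ i, ‖ξ‖ * |ξ i| ^ 2 := by
              refine Finset.sum_le_sum fun i _ => ?_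
              calc |ξ i| ^ 3 = |ξ i| * |ξ i| ^ 2 := by ring
                _ ≤ ‖ξ‖ * |ξ i| ^ 2 :=
                  mul_le_mul_of_nonneg_right (stmt8_abs_coord_le_norm ξ i) (by positivity)
          _ = ‖ξ‖ * ∑ i, |ξ i| ^ 2 := by rw [Finset.mul_sum]
          _ = ‖ξ‖ * ‖ξ‖ ^ 2 := by rw [stmt8_sum_sq_eq]
          _ = ‖ξ‖ ^ 3 := by ring
      have h4 : ∑ i, h ^ 2 * |ξ i| ^ 3 / 24 ≤ h ^ 2 * ‖ξ‖ ^ 3 / 24 := by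
        calc ∑ i, h ^ 2 * |ξ i| ^ 3 / 24 = h ^ 2 / 24 * ∑ i, |ξ i| ^ 3 := by
              rw [Finset.mul_sum]; exact Finset.sum_congr rfl fun i _ => by ring
          _ ≤ h ^ 2 / 24 * ‖ξ‖ ^ 3 := mul_le_mul_of_nonneg_left h5 (by positivity)
          _ = h ^ 2 * ‖ξ‖ ^ 3 / 24 := by ring
      linarith
    have hN : |G0 η - G0 ξ| ≤ Cb / 24 * (h ^ (2:ℝ) * ‖ξ‖ ^ (β + 3)) := by
      have e1 : h ^ (2:ℝ) = h ^ (2:ℕ) := by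
        rw [← Real.rpow_natCast h 2]; norm_num
      have e2 : ‖ξ‖ ^ (β + 3) = ‖ξ‖ ^ β * ‖ξ‖ ^ (3:ℕ) := by
        rw [← Real.rpow_natCast ‖ξ‖ 3, ← Real.rpow_add hξn]; norm_num
      calc |G0 η - G0 ξ| ≤ Cb * ‖ξ‖ ^ β * ‖η - ξ‖ := hmvt
        _ ≤ Cb * ‖ξ‖ ^ β * (h ^ 2 * ‖ξ‖ ^ 3 / 24) :=
          mul_le_mul_of_nonneg_left hdist
            (mul_nonneg hCb.le (Real.rpow_nonneg (norm_nonneg _) _))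
        _ = Cb / 24 * (h ^ (2:ℝ) * ‖ξ‖ ^ (β + 3)) := by rw [e1, e2]; ring
    have hhB : h * ‖ξ‖ ≤ B := by
      have h1 : h * ‖ξ‖ ≤ ∑ i, |h * ξ i| := by
        calc h * ‖ξ‖ ≤ h * ∑ i, |ξ i| :=
              mul_le_mul_of_nonneg_left (stmt8_norm_le_sum_abs ξ) hh.le
          _ = ∑ i, |h * ξ i| := by
              rw [Finset.mul_sum]
              exact Finset.sum_congr rfl fun i _ => by
                rw [_root_.abs_mul, _root_.abs_of_pos hh]
      have h2 : ∑ i, |h * ξ i| ≤ (d : ℝ) * (3 * π / 2) := by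
        calc ∑ i, |h * ξ i| ≤ ∑ _i : Fin d, 3 * π / 2 := Finset.sum_le_sum fun i _ => hbox i
          _ = (d : ℝ) * (3 * π / 2) := by
              simp [Finset.sum_const, Finset.card_univ, nsmul_eq_mul]
      exact le_trans (h1.trans h2) (le_max_left _ _)
    have hsplit : h ^ (2:ℝ) * ‖ξ‖ ^ (β + 3)
        = h ^ γ * ((h * ‖ξ‖) ^ (2 - γ) * ‖ξ‖ ^ (β + 1 + γ)) := by
      rw [Real.mul_rpow hh.le (norm_nonneg _),
        show h ^ γ * (h ^ (2 - γ) * ‖ξ‖ ^ (2 - γ) * ‖ξ‖ ^ (β + 1 + γ))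
          = (h ^ γ * h ^ (2 - γ)) * (‖ξ‖ ^ (2 - γ) * ‖ξ‖ ^ (β + 1 + γ)) from by ring,
        ← Real.rpow_add hh, ← Real.rpow_add hξn,
        show γ + (2 - γ) = (2:ℝ) by ring, show 2 - γ + (β + 1 + γ) = β + 3 by ring]
    rw [hGdisc]
    have ha0 := hC.nonneg η
    have hb0 := hC.nonneg ξ
    have hd1 : (0:ℝ) < G0 η + 1 := by linarith
    have hd2 : (0:ℝ) < G0 ξ + 1 := by linarith
    have hden : 0 < (G0 η + 1) * (G0 ξ + 1) := mul_pos hd1 hd2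
    have heq : (G0 η + 1)⁻¹ - (G0 ξ + 1)⁻¹ = (G0 ξ - G0 η) / ((G0 η + 1) * (G0 ξ + 1)) := by
      field_simp
      ring
    rw [heq, abs_div, _root_.abs_of_pos hden, abs_sub_comm]
    have hNnn : 0 ≤ Cb / 24 * (h ^ (2:ℝ) * ‖ξ‖ ^ (β + 3)) :=
      mul_nonneg (div_nonneg hCb.le (by norm_num))
        (mul_nonneg (Real.rpow_nonneg hh.le _) (Real.rpow_nonneg (norm_nonneg _) _))
    rcases le_or_gt ‖ξ‖ R with hle | hgt
    · have hD1 : 1 ≤ (G0 η + 1) * (G0 ξ + 1) := by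
        calc (1:ℝ) = 1 * 1 := by norm_num
          _ ≤ (G0 η + 1) * (G0 ξ + 1) :=
            mul_le_mul (by linarith) (by linarith) (by norm_num) (by linarith)
      calc |G0 η - G0 ξ| / ((G0 η + 1) * (G0 ξ + 1))
          ≤ |G0 η - G0 ξ| / 1 :=
            div_le_div_of_nonneg_left (abs_nonneg _) one_pos hD1
        _ = |G0 η - G0 ξ| := div_one _
        _ ≤ Cb / 24 * (h ^ (2:ℝ) * ‖ξ‖ ^ (β + 3)) := hN
        _ = Cb / 24 * (h ^ γ * ((h * ‖ξ‖) ^ (2 - γ) * ‖ξ‖ ^ (β + 1 + γ))) := by rw [hsplit]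
        _ ≤ Cb / 24 * (h ^ γ * (B ^ (2 - γ) * R ^ (β + 1 + γ))) := by
            have b1 : (h * ‖ξ‖) ^ (2 - γ) ≤ B ^ (2 - γ) :=
              Real.rpow_le_rpow (by positivity) hhB (by linarith)
            have b2 : ‖ξ‖ ^ (β + 1 + γ) ≤ R ^ (β + 1 + γ) :=
              Real.rpow_le_rpow (norm_nonneg _) hle (by linarith)
            have b3 := mul_le_mul b1 b2 (Real.rpow_nonneg (norm_nonneg _) _) hBγ.le
            exact mul_le_mul_of_nonneg_left (mul_le_mul_of_nonneg_left b3 hhγ.le)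
              (div_nonneg hCb.le (by norm_num))
        _ ≤ CC * h ^ γ := by
            rw [show Cb / 24 * (h ^ γ * (B ^ (2 - γ) * R ^ (β + 1 + γ)))
              = Cb / 24 * B ^ (2 - γ) * R ^ (β + 1 + γ) * h ^ γ from by ring, hCCdef]
            refine mul_le_mul_of_nonneg_right ?_ hhγ.le
            refine mul_le_mul_of_nonneg_left ?_
              (mul_nonneg (div_nonneg hCb.le (by norm_num)) hBγ.le)
            linarith [inv_pos.2 hcs]
    · have hξR : R ≤ ‖ξ‖ := hgt.le
      have hξc0 : c0 ≤ ‖ξ‖ := by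
        have h6 : stmt8s0 * R ≤ 1 * R := mul_le_mul_of_nonneg_right hs01 (by linarith)
        rw [one_mul] at h6
        linarith
      have hηlo : stmt8s0 * ‖ξ‖ ≤ ‖η‖ := hζlo η (right_mem_segment ℝ ξ η)
      have hηc0 : c0 ≤ ‖η‖ := by
        have h7 : stmt8s0 * R ≤ stmt8s0 * ‖ξ‖ := mul_le_mul_of_nonneg_left hξR hs0.le
        linarith
      have hblow := hlow ξ hξc0
      have halow : c * (stmt8s0 * ‖ξ‖) ^ α ≤ G0 η := by
        refine le_trans (mul_le_mul_of_nonneg_left ?_ hc.le) (hlow η hηc0)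
        exact Real.rpow_le_rpow (mul_nonneg hs0.le (norm_nonneg _)) hηlo hα0.le
      have hprod : c ^ 2 * stmt8s0 ^ α * ‖ξ‖ ^ (2 * α) ≤ (G0 η + 1) * (G0 ξ + 1) := by
        have e1 : c * (stmt8s0 * ‖ξ‖) ^ α * (c * ‖ξ‖ ^ α)
            = c ^ 2 * stmt8s0 ^ α * ‖ξ‖ ^ (2 * α) := by
          rw [Real.mul_rpow hs0.le (norm_nonneg _),
            show 2 * α = α + α from by ring, Real.rpow_add hξn]
          ring
        have e2 := mul_le_mul halow hblow
          (mul_nonneg hc.le (Real.rpow_nonneg (norm_nonneg _) _)) ha0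
        calc c ^ 2 * stmt8s0 ^ α * ‖ξ‖ ^ (2 * α)
            = c * (stmt8s0 * ‖ξ‖) ^ α * (c * ‖ξ‖ ^ α) := e1.symm
          _ ≤ G0 η * G0 ξ := e2
          _ ≤ (G0 η + 1) * (G0 ξ + 1) :=
            mul_le_mul (by linarith) (by linarith) hb0 (by linarith)
      have hDpos : 0 < c ^ 2 * stmt8s0 ^ α * ‖ξ‖ ^ (2 * α) :=
        mul_pos hcs (Real.rpow_pos_of_pos hξn _)
      calc |G0 η - G0 ξ| / ((G0 η + 1) * (G0 ξ + 1))
          ≤ Cb / 24 * (h ^ (2:ℝ) * ‖ξ‖ ^ (β + 3)) / (c ^ 2 * stmt8s0 ^ α * ‖ξ‖ ^ (2 * α)) :=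
            div_le_div₀ hNnn hN hDpos hprod
        _ = Cb / 24 * (c ^ 2 * stmt8s0 ^ α)⁻¹
            * (h ^ γ * ((h * ‖ξ‖) ^ (2 - γ) * ‖ξ‖ ^ (β + 1 + γ - 2 * α))) := by
            have e3 : ‖ξ‖ ^ (β + 1 + γ) = ‖ξ‖ ^ (β + 1 + γ - 2 * α) * ‖ξ‖ ^ (2 * α) := by
              rw [← Real.rpow_add hξn]; congr 1; ring
            rw [hsplit, e3]
            have hne1 : (c ^ 2 * stmt8s0 ^ α) ≠ 0 := hcs.ne'
            have hne2 : ‖ξ‖ ^ (2 * α) ≠ 0 := (Real.rpow_pos_of_pos hξn _).ne'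
            field_simp
        _ ≤ Cb / 24 * (c ^ 2 * stmt8s0 ^ α)⁻¹ * (h ^ γ * (B ^ (2 - γ) * 1)) := by
            have b1 : (h * ‖ξ‖) ^ (2 - γ) ≤ B ^ (2 - γ) :=
              Real.rpow_le_rpow (by positivity) hhB (by linarith)
            have b2 : ‖ξ‖ ^ (β + 1 + γ - 2 * α) ≤ 1 :=
              Real.rpow_le_one_of_one_le_of_nonpos (le_trans hR1 hξR) (by linarith)
            have b3 := mul_le_mul b1 b2
              (Real.rpow_nonneg (norm_nonneg _) _) hBγ.le
            exact mul_le_mul_of_nonneg_left (mul_le_mul_of_nonneg_left b3 hhγ.le)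
              (mul_nonneg (div_nonneg hCb.le (by norm_num)) (inv_nonneg.2 hcs.le))
        _ ≤ CC * h ^ γ := by
            rw [show Cb / 24 * (c ^ 2 * stmt8s0 ^ α)⁻¹ * (h ^ γ * (B ^ (2 - γ) * 1))
              = Cb / 24 * B ^ (2 - γ) * (c ^ 2 * stmt8s0 ^ α)⁻¹ * h ^ γ from by ring, hCCdef]
            refine mul_le_mul_of_nonneg_right ?_ hhγ.le
            refine mul_le_mul_of_nonneg_left ?_
              (mul_nonneg (div_nonneg hCb.le (by norm_num)) hBγ.le)
            linarith [hRγ]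


end
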